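/- Let f : ℕ → ℝ be the function with f(m) = 1 for all m ≥ 1 (the value f(0) is irrelevant since only d(f) is used). Then for all integers k ≥ 1 and n ≥ 1: if λ = 0 then the k-th divided power satisfies f^{[k]}(n) = S(n,k), the Stirling number of the second kind; and if λ = 1 then f^{[k]}(n) = \overline{S}(n,k), the generalized Stirling number of the second kind. -/

import Mathlib

/-- The weight-`lam` product on functions `ℕ → ℝ`. -/
noncomputable def starMul (lam : ℝ) (a b : ℕ → ℝ) : ℕ → ℝ := fun u =>
  ∑ p ∈ Finset.HasAntidiagonal.antidiagonal u, ∑ q ∈ Finset.HasAntidiagonal.antidiagonal p.2,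
    lam ^ p.1 * ((Nat.factorial u : ℝ) /
      ((Nat.factorial p.1 : ℝ) * (Nat.factorial q.1 : ℝ) * (Nat.factorial q.2 : ℝ))) *
      a (p.1 + q.1) * b (p.1 + q.2)

/-- `δ_k : ℕ → ℝ`. -/
noncomputable def delta (k : ℕ) : ℕ → ℝ := fun m => if m = k then 1 else 0

/-- The shift operator `d`: `d(a)(n) = a(n+1)`. -/
noncomputable def dOp (a : ℕ → ℝ) : ℕ → ℝ := fun n => a (n + 1)

/-- The shift operator `P`: `P(a)(0) = 0` and `P(a)(n) = a(n−1)` for `n ≥ 1`. -/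
noncomputable def pOp (a : ℕ → ℝ) : ℕ → ℝ := fun n =>
  match n with
  | 0 => 0
  | m + 1 => a m

/-- The divided powers: `f^{[0]} = δ₀` and `f^{[k]} = P(f^{[k−1]} ⋆ d(f))` for `k ≥ 1`. -/
noncomputable def divPow (lam : ℝ) (f : ℕ → ℝ) : ℕ → ℕ → ℝ
  | 0 => delta 0
  | k + 1 => pOp (starMul lam (divPow lam f k) (dOp f))

/-- The Stirling number of the second kind `S(n,k)`. -/
def stirling2 (n k : ℕ) : ℕ :=
  (Finset.univ.filter (fun π : Finset (Finset (Fin n)) =>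
    π.card = k ∧ (∀ B ∈ π, B.Nonempty) ∧
    (∀ B ∈ π, ∀ C ∈ π, B ≠ C → Disjoint B C) ∧
    π.biUnion id = Finset.univ)).card

/-- The generalized Stirling number of the second kind `\overline{S}(n,k)`. -/
def gstirling (n k : ℕ) : ℕ :=
  (Finset.univ.filter (fun B : Fin k → Finset (Fin n) =>
    (∀ i, (B i).Nonempty) ∧ Finset.univ.biUnion B = Finset.univ ∧
    ∀ i j : Fin k, i < j → (B i).max < (B j).max)).card

open Finset

theorem tri_swap {M : Type*} [AddCommMonoid M] (m : ℕ) (g : ℕ → ℕ → M) :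
    (∑ i ∈ range (m+1), ∑ l ∈ range (m+1-i), g i l) =
      ∑ j ∈ range (m+1), ∑ i ∈ range (j+1), g i (j-i) := by
  rw [Finset.sum_sigma', Finset.sum_sigma']
  refine sum_nbij' (fun x => (⟨x.1 + x.2, x.1⟩ : (_ : ℕ) × ℕ))
    (fun x => (⟨x.2, x.1 - x.2⟩ : (_ : ℕ) × ℕ)) ?_ ?_ ?_ ?_ ?_
  · rintro ⟨a, b⟩ h
    simp only [Finset.mem_sigma, Finset.mem_range] at *
    omega
  · rintro ⟨a, b⟩ h
    simp only [Finset.mem_sigma, Finset.mem_range] at *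
    omega
  · rintro ⟨a, b⟩ h
    simp only [Finset.mem_sigma, Finset.mem_range] at h
    simp only []
    congr 1 <;> omega
  · rintro ⟨a, b⟩ h
    simp only [Finset.mem_sigma, Finset.mem_range] at h
    simp only []
    congr 1 <;> omega
  · rintro ⟨a, b⟩ h
    simp only [Finset.mem_sigma, Finset.mem_range] at h
    show g a b = g a (a + b - a)
    congr 1; omega

theorem fact_div_eq_choose (m j : ℕ) (hj : j ≤ m) :
    (Nat.factorial m : ℝ) / ((Nat.factorial j : ℝ) * (Nat.factorial (m - j) : ℝ)) =
      (m.choose j : ℝ) := by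
  rw [div_eq_iff (by positivity)]
  push_cast [← Nat.choose_mul_factorial_mul_factorial hj]
  ring

theorem fact_div_eq_choose3 (m j i : ℕ) (hj : j ≤ m) (hi : i ≤ j) :
    (Nat.factorial m : ℝ) / ((Nat.factorial i : ℝ) * (Nat.factorial (j - i) : ℝ)
      * (Nat.factorial (m - j) : ℝ)) = (m.choose j : ℝ) * (j.choose i : ℝ) := by
  have h1 := Nat.choose_mul_factorial_mul_factorial hj
  have h2 := Nat.choose_mul_factorial_mul_factorial hi
  have key : m.choose j * j.choose i *
      (Nat.factorial i * Nat.factorial (j-i) * Nat.factorial (m-j)) = Nat.factorial m := by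
    rw [← h1, ← h2]; ring
  have keyR : (Nat.factorial m : ℝ) = (m.choose j : ℝ) * (j.choose i : ℝ) *
      ((Nat.factorial i : ℝ) * (Nat.factorial (j-i) : ℝ) * (Nat.factorial (m-j) : ℝ)) := by
    exact_mod_cast key.symm
  rw [div_eq_iff (by positivity), keyR]

theorem starMul_zero (f a : ℕ → ℝ) (hf : ∀ m : ℕ, 1 ≤ m → f m = 1) (m : ℕ) :
    starMul 0 a (dOp f) m = ∑ j ∈ range (m+1), (m.choose j : ℝ) * a j := by
  unfold starMul
  rw [Finset.sum_eq_single (0, m)]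
  · rw [Finset.Nat.sum_antidiagonal_eq_sum_range_succ_mk]
    refine Finset.sum_congr rfl fun j hj => ?_
    rw [Finset.mem_range] at hj
    have hj' : j ≤ m := by omega
    simp only [dOp, pow_zero, Nat.factorial_zero, Nat.cast_one, one_mul, zero_add]
    rw [hf _ (by omega), fact_div_eq_choose m j hj']
    ring
  · rintro ⟨p1, p2⟩ hp hne
    rw [Finset.HasAntidiagonal.mem_antidiagonal] at hp
    have : p1 ≠ 0 := by rintro rfl; exact hne (by simp [← hp])
    simp [zero_pow this]
  · intro h
    exact absurd (Finset.HasAntidiagonal.mem_antidiagonal.mpr (by simp)) h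

theorem starMul_one (f a : ℕ → ℝ) (hf : ∀ m : ℕ, 1 ≤ m → f m = 1) (m : ℕ) :
    starMul 1 a (dOp f) m = ∑ j ∈ range (m+1), (m.choose j : ℝ) * 2 ^ j * a j := by
  unfold starMul
  rw [Finset.Nat.sum_antidiagonal_eq_sum_range_succ_mk]
  have step : ∀ i ∈ range (m+1),
      (∑ q ∈ Finset.HasAntidiagonal.antidiagonal (m - i),
        (1:ℝ) ^ i * ((Nat.factorial m : ℝ) /
          ((Nat.factorial i : ℝ) * (Nat.factorial q.1 : ℝ) * (Nat.factorial q.2 : ℝ))) *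
          a (i + q.1) * dOp f (i + q.2)) =
      ∑ l ∈ range (m+1-i), ((Nat.factorial m : ℝ) /
          ((Nat.factorial i : ℝ) * (Nat.factorial l : ℝ) * (Nat.factorial (m-i-l) : ℝ))) *
          a (i + l) := by
    intro i hi
    rw [Finset.mem_range] at hi
    rw [Finset.Nat.sum_antidiagonal_eq_sum_range_succ_mk]
    have : range ((m - i).succ) = range (m + 1 - i) := by congr 1; omega
    rw [this]
    refine Finset.sum_congr rfl fun l hl => ?_
    simp only [dOp, one_pow, one_mul]
    rw [hf _ (by omega)]
    ring
  rw [Finset.sum_congr rfl step, tri_swap m (fun i l => ((Nat.factorial m : ℝ) /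
      ((Nat.factorial i : ℝ) * (Nat.factorial l : ℝ) * (Nat.factorial (m-i-l) : ℝ))) * a (i + l))]
  refine Finset.sum_congr rfl fun j hj => ?_
  rw [Finset.mem_range] at hj
  have hj' : j ≤ m := by omega
  have : ∀ i ∈ range (j+1),
      ((Nat.factorial m : ℝ) / ((Nat.factorial i : ℝ) * (Nat.factorial (j-i) : ℝ)
        * (Nat.factorial (m-i-(j-i)) : ℝ))) * a (i + (j-i)) =
      ((m.choose j : ℝ) * (j.choose i : ℝ)) * a j := by
    intro i hi
    rw [Finset.mem_range] at hi
    have h1 : m - i - (j - i) = m - j := by omega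
    have h2 : i + (j - i) = j := by omega
    rw [h1, h2, fact_div_eq_choose3 m j i hj' (by omega)]
  rw [Finset.sum_congr rfl this, ← Finset.sum_mul, ← Finset.mul_sum, ← Nat.cast_sum,
    Nat.sum_range_choose]
  push_cast
  ring

variable {α : Type*} [DecidableEq α] {β : Type*} [DecidableEq β] [Fintype β]

def partCount (T : Finset α) (k : ℕ) : ℕ :=
  (T.powerset.powerset.filter (fun π : Finset (Finset α) =>
    π.card = k ∧ (∀ B ∈ π, B.Nonempty) ∧
    (∀ B ∈ π, ∀ C ∈ π, B ≠ C → Disjoint B C) ∧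
    π.biUnion id = T)).card

def gpartCount {α : Type*} [DecidableEq α] [LinearOrder α] (T : Finset α) (k : ℕ) : ℕ :=
  ((Fintype.piFinset (fun _ : Fin k => T.powerset)).filter (fun B : Fin k → Finset α =>
    (∀ i, (B i).Nonempty) ∧ Finset.univ.biUnion B = T ∧
    ∀ i j : Fin k, i < j → (B i).max < (B j).max)).card

theorem stirling2_eq_partCount (n k : ℕ) :
    stirling2 n k = partCount (Finset.univ : Finset (Fin n)) k := by
  unfold stirling2 partCount
  rw [Finset.powerset_univ, Finset.powerset_univ]
  congr

theorem gstirling_eq_gpartCount (n k : ℕ) :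
    gstirling n k = gpartCount (Finset.univ : Finset (Fin n)) k := by
  unfold gstirling gpartCount
  rw [Finset.powerset_univ, Fintype.piFinset_univ]

section transport

variable (g : β → α) (hg : Function.Injective g) (T : Finset α)
  (hT : Finset.univ.image g = T)

include hg in
theorem block_roundtrip1 (B : Finset β) :
    Finset.univ.filter (fun x => g x ∈ B.image g) = B := by
  ext x
  simp only [Finset.mem_filter, Finset.mem_univ, true_and, Finset.mem_image]
  constructor
  · rintro ⟨a, ha, h⟩; rwa [← hg h]
  · intro h; exact ⟨x, h, rfl⟩

include hT in
theorem block_roundtrip2 (B : Finset α) (hB : B ⊆ T) :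
    (Finset.univ.filter (fun x => g x ∈ B)).image g = B := by
  ext y
  simp only [Finset.mem_image, Finset.mem_filter, Finset.mem_univ, true_and]
  constructor
  · rintro ⟨x, hx, rfl⟩; exact hx
  · intro hy
    have : y ∈ Finset.univ.image g := hT ▸ hB hy
    obtain ⟨x, -, rfl⟩ := Finset.mem_image.mp this
    exact ⟨x, hy, rfl⟩

include hg hT in
theorem partCount_transport (k : ℕ) :
    partCount (Finset.univ : Finset β) k = partCount T k := by
  unfold partCount
  refine Finset.card_nbij' (fun π => π.image (fun B => B.image g))
    (fun π => π.image (fun B => Finset.univ.filter (fun x => g x ∈ B))) ?_ ?_ ?_ ?_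
  · intro π hπ
    simp only [Finset.mem_coe, Finset.mem_filter, Finset.mem_powerset] at hπ ⊢
    obtain ⟨hsub, hcard, hne, hdisj, hcover⟩ := hπ
    have himg : ∀ B ∈ π.image (fun B => B.image g), ∃ B' ∈ π, B = B'.image g := by
      intro B hB
      obtain ⟨B', hB', rfl⟩ := Finset.mem_image.mp hB
      exact ⟨B', hB', rfl⟩
    refine ⟨?_, ?_, ?_, ?_, ?_⟩
    · intro B hB
      obtain ⟨B', hB', rfl⟩ := himg B hB
      rw [Finset.mem_powerset, ← hT]
      exact Finset.image_subset_image (Finset.subset_univ _)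
    · rw [Finset.card_image_of_injective _ (Finset.image_injective hg)]; exact hcard
    · intro B hB
      obtain ⟨B', hB', rfl⟩ := himg B hB
      exact (Finset.image_nonempty).mpr (hne B' hB')
    · intro B hB C hC hBC
      obtain ⟨B', hB', rfl⟩ := himg B hB
      obtain ⟨C', hC', rfl⟩ := himg C hC
      rw [Finset.disjoint_image hg]
      exact hdisj B' hB' C' hC' (fun h => hBC (by rw [h]))
    · rw [← hT]
      ext y
      simp only [Finset.mem_biUnion, Finset.mem_image, id_eq, Finset.mem_univ, true_and]
      constructor
      · rintro ⟨B, ⟨B', hB', rfl⟩, hyB⟩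
        obtain ⟨x, hx, rfl⟩ := Finset.mem_image.mp hyB
        exact ⟨x, rfl⟩
      · rintro ⟨x, rfl⟩
        have : x ∈ π.biUnion id := hcover ▸ Finset.mem_univ x
        obtain ⟨B, hB, hxB⟩ := Finset.mem_biUnion.mp this
        exact ⟨Finset.image g B, ⟨B, hB, rfl⟩, Finset.mem_image_of_mem g hxB⟩
  · intro π hπ
    simp only [Finset.mem_coe, Finset.mem_filter, Finset.mem_powerset] at hπ ⊢
    obtain ⟨hsub, hcard, hne, hdisj, hcover⟩ := hπ
    have hinj : Set.InjOn (fun B => Finset.univ.filter (fun x => g x ∈ B)) (π : Set (Finset α)) := by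
      intro B hB C hC h
      have := congrArg (fun s => s.image g) h
      simpa [block_roundtrip2 g T hT B (Finset.mem_powerset.mp (hsub hB)),
        block_roundtrip2 g T hT C (Finset.mem_powerset.mp (hsub hC))] using this
    refine ⟨fun B hB => Finset.mem_powerset.mpr (Finset.subset_univ _), ?_, ?_, ?_, ?_⟩
    · rw [Finset.card_image_of_injOn hinj]; exact hcard
    · intro B hB
      obtain ⟨B', hB', rfl⟩ := Finset.mem_image.mp hB
      obtain ⟨y, hy⟩ := hne B' hB'
      have : y ∈ Finset.univ.image g := hT ▸ (Finset.mem_powerset.mp (hsub hB')) hy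
      obtain ⟨x, -, rfl⟩ := Finset.mem_image.mp this
      exact ⟨x, by simp [hy]⟩
    · intro B hB C hC hBC
      obtain ⟨B', hB', rfl⟩ := Finset.mem_image.mp hB
      obtain ⟨C', hC', rfl⟩ := Finset.mem_image.mp hC
      have hBC' : B' ≠ C' := fun h => hBC (by rw [h])
      have := hdisj B' hB' C' hC' hBC'
      rw [Finset.disjoint_left] at this ⊢
      intro x hx hx'
      simp only [Finset.mem_filter, Finset.mem_univ, true_and] at hx hx'
      exact this hx hx'
    · ext x
      simp only [Finset.mem_biUnion, Finset.mem_image, id]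
      constructor
      · intro _; exact Finset.mem_univ x
      · intro _
        have hx : g x ∈ T := hT ▸ Finset.mem_image_of_mem g (Finset.mem_univ x)
        rw [← hcover] at hx
        obtain ⟨B, hB, hxB⟩ := Finset.mem_biUnion.mp hx
        exact ⟨_, ⟨B, hB, rfl⟩, by simpa using hxB⟩
  · intro π hπ
    dsimp only
    rw [Finset.image_image]
    have h2 : Set.EqOn ((fun B => Finset.univ.filter fun x => g x ∈ B) ∘ (fun B => B.image g))
        id (π : Set (Finset β)) := fun B _ => block_roundtrip1 g hg B
    rw [Finset.image_congr h2, Finset.image_id]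
  · intro π hπ
    simp only [Finset.mem_coe, Finset.mem_filter, Finset.mem_powerset] at hπ
    dsimp only
    rw [Finset.image_image]
    have h2 : Set.EqOn ((fun B => B.image g) ∘ (fun B => Finset.univ.filter fun x => g x ∈ B))
        id (π : Set (Finset α)) :=
      fun B hB => block_roundtrip2 g T hT B (Finset.mem_powerset.mp (hπ.1 hB))
    rw [Finset.image_congr h2, Finset.image_id]

end transport

section gtransport

variable {α' β' : Type*} [DecidableEq α'] [DecidableEq β'] [LinearOrder α'] [LinearOrder β'] [Fintype β']
  (g : β' → α') (hg : StrictMono g) (T : Finset α') (hT : Finset.univ.image g = T)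

include hg in
theorem max'_image' (s : Finset β') (hs : s.Nonempty) :
    (s.image g).max' (hs.image g) = g (s.max' hs) := by
  apply le_antisymm
  · apply Finset.max'_le
    intro y hy
    obtain ⟨x, hx, rfl⟩ := Finset.mem_image.mp hy
    exact hg.monotone (Finset.le_max' s x hx)
  · exact Finset.le_max' _ _ (Finset.mem_image_of_mem g (s.max'_mem hs))

include hg in
theorem max_image_lt_iff (s t : Finset β') (hs : s.Nonempty) (ht : t.Nonempty) :
    (s.image g).max < (t.image g).max ↔ s.max < t.max := by
  have hs' : (s.image g).Nonempty := hs.image g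
  have ht' : (t.image g).Nonempty := ht.image g
  rw [← Finset.coe_max' hs', ← Finset.coe_max' ht', ← Finset.coe_max' hs, ← Finset.coe_max' ht,
    WithBot.coe_lt_coe, WithBot.coe_lt_coe, max'_image' g hg s hs,
    max'_image' g hg t ht, hg.lt_iff_lt]

include hg hT in
theorem gpartCount_transport (k : ℕ) :
    gpartCount (Finset.univ : Finset β') k = gpartCount T k := by
  unfold gpartCount
  refine Finset.card_nbij' (fun B => fun i => (B i).image g)
    (fun C => fun i => Finset.univ.filter (fun x => g x ∈ C i)) ?_ ?_ ?_ ?_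
  · intro B hB
    simp only [Finset.mem_coe, Finset.mem_filter, Fintype.mem_piFinset, Finset.mem_powerset] at hB ⊢
    obtain ⟨hsub, hne, hcover, hmax⟩ := hB
    refine ⟨fun i => ?_, fun i => (hne i).image g, ?_, fun i j hij => ?_⟩
    · rw [← hT]; exact Finset.image_subset_image (Finset.subset_univ _)
    · rw [← hT]
      ext y
      simp only [Finset.mem_biUnion, Finset.mem_image, Finset.mem_univ, true_and]
      constructor
      · rintro ⟨i, ⟨x, hx, rfl⟩⟩
        exact ⟨x, rfl⟩
      · rintro ⟨x, rfl⟩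
        have : x ∈ Finset.univ.biUnion B := hcover ▸ Finset.mem_univ x
        obtain ⟨i, -, hxB⟩ := Finset.mem_biUnion.mp this
        exact ⟨i, x, hxB, rfl⟩
    · exact (max_image_lt_iff g hg _ _ (hne i) (hne j)).mpr (hmax i j hij)
  · intro C hC
    simp only [Finset.mem_coe, Finset.mem_filter, Fintype.mem_piFinset, Finset.mem_powerset] at hC ⊢
    obtain ⟨hsub, hne, hcover, hmax⟩ := hC
    have heq : ∀ i, (Finset.univ.filter (fun x => g x ∈ C i)).image g = C i :=
      fun i => block_roundtrip2 g T hT (C i) (hsub i)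
    have hne' : ∀ i, (Finset.univ.filter (fun x => g x ∈ C i)).Nonempty := by
      intro i
      obtain ⟨y, hy⟩ := hne i
      have : y ∈ (Finset.univ.filter (fun x => g x ∈ C i)).image g := (heq i).symm ▸ hy
      obtain ⟨x, hx, rfl⟩ := Finset.mem_image.mp this
      exact ⟨x, hx⟩
    refine ⟨fun i => Finset.subset_univ _, hne', ?_, fun i j hij => ?_⟩
    · ext x
      simp only [Finset.mem_biUnion, Finset.mem_filter, Finset.mem_univ, true_and]
      constructor
      · intro _; trivial
      · intro _
        have hx : g x ∈ T := hT ▸ Finset.mem_image_of_mem g (Finset.mem_univ x)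
        rw [← hcover] at hx
        obtain ⟨i, -, hxC⟩ := Finset.mem_biUnion.mp hx
        exact ⟨i, hxC⟩
    · have := hmax i j hij
      rw [← heq i, ← heq j] at this
      exact (max_image_lt_iff g hg _ _ (hne' i) (hne' j)).mp this
  · intro B hB
    funext i
    exact block_roundtrip1 g hg.injective (B i)
  · intro C hC
    simp only [Finset.mem_coe, Finset.mem_filter, Fintype.mem_piFinset, Finset.mem_powerset] at hC
    funext i
    exact block_roundtrip2 g T hT (C i) (hC.1 i)

end gtransport

section toStirling

variable {α : Type*} [DecidableEq α] [LinearOrder α]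

theorem ordEmbed_image (T : Finset α) :
    Finset.univ.image (fun i : Fin T.card => ((T.orderIsoOfFin rfl) i : α)) = T := by
  ext y
  simp only [Finset.mem_image, Finset.mem_univ, true_and]
  constructor
  · rintro ⟨i, rfl⟩; exact ((T.orderIsoOfFin rfl) i).2
  · intro hy; exact ⟨(T.orderIsoOfFin rfl).symm ⟨y, hy⟩, by simp⟩

theorem ordEmbed_strictMono (T : Finset α) :
    StrictMono (fun i : Fin T.card => ((T.orderIsoOfFin rfl) i : α)) := by
  intro i j hij
  exact (T.orderIsoOfFin rfl).lt_iff_lt.mpr hij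

theorem partCount_eq_stirling2 (T : Finset α) (k : ℕ) :
    partCount T k = stirling2 T.card k := by
  have h1 := partCount_transport _ (ordEmbed_strictMono T).injective T (ordEmbed_image T) k
  have h2 := stirling2_eq_partCount T.card k
  exact (h2.trans h1).symm

theorem gpartCount_eq_gstirling (T : Finset α) (k : ℕ) :
    gpartCount T k = gstirling T.card k := by
  have h1 := gpartCount_transport _ (ordEmbed_strictMono T) T (ordEmbed_image T) k
  have h2 := gstirling_eq_gpartCount T.card k
  exact (h2.trans h1).symm

end toStirling

theorem stirling2_zero_right (n : ℕ) : stirling2 n 0 = if n = 0 then 1 else 0 := by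
  unfold stirling2
  rcases n with _ | m
  · rw [if_pos rfl]
    rw [Finset.card_eq_one]
    refine ⟨∅, ?_⟩
    ext π
    simp only [Finset.mem_filter, Finset.mem_univ, true_and, Finset.mem_singleton,
      Finset.card_eq_zero]
    constructor
    · rintro ⟨rfl, -⟩; rfl
    · rintro rfl
      refine ⟨rfl, by simp, by simp, ?_⟩
      ext x; exact absurd x.2 (by omega)
  · rw [if_neg (by omega), Finset.card_eq_zero]
    ext π
    simp only [Finset.mem_filter, Finset.mem_univ, true_and, Finset.notMem_empty, iff_false]
    rintro ⟨hcard, -, -, hcover⟩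
    rw [Finset.card_eq_zero] at hcard
    subst hcard
    have : (0 : Fin (m+1)) ∈ (∅ : Finset (Finset (Fin (m+1)))).biUnion id := by
      rw [hcover]; exact Finset.mem_univ _
    simp at this

theorem stirling2_zero_left (k : ℕ) : stirling2 0 (k+1) = 0 := by
  unfold stirling2
  rw [Finset.card_eq_zero]
  ext π
  simp only [Finset.mem_filter, Finset.mem_univ, true_and, Finset.notMem_empty, iff_false]
  rintro ⟨hcard, hne, -, -⟩
  have : π.Nonempty := Finset.card_pos.mp (by omega)
  obtain ⟨B, hB⟩ := this
  obtain ⟨x, -⟩ := hne B hB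
  exact absurd x.2 (by omega)

theorem gstirling_zero_right (n : ℕ) : gstirling n 0 = if n = 0 then 1 else 0 := by
  unfold gstirling
  rcases n with _ | m
  · rw [if_pos rfl, Finset.card_eq_one]
    refine ⟨fun i => ∅, ?_⟩
    ext B
    simp only [Finset.mem_filter, Finset.mem_univ, true_and, Finset.mem_singleton]
    constructor
    · rintro -; funext i; exact absurd i.2 (by omega)
    · rintro rfl
      refine ⟨fun i => absurd i.2 (by omega), ?_, fun i j _ => absurd i.2 (by omega)⟩
      ext x; exact absurd x.2 (by omega)
  · rw [if_neg (by omega), Finset.card_eq_zero]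
    ext B
    simp only [Finset.mem_filter, Finset.mem_univ, true_and, Finset.notMem_empty, iff_false]
    rintro ⟨-, hcover, -⟩
    have : (0 : Fin (m+1)) ∈ (Finset.univ : Finset (Fin 0)).biUnion B := by
      rw [hcover]; exact Finset.mem_univ _
    obtain ⟨i, -, -⟩ := Finset.mem_biUnion.mp this
    exact absurd i.2 (by omega)

theorem gstirling_zero_left (k : ℕ) : gstirling 0 (k+1) = 0 := by
  unfold gstirling
  rw [Finset.card_eq_zero]
  ext B
  simp only [Finset.mem_filter, Finset.mem_univ, true_and, Finset.notMem_empty, iff_false]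
  rintro ⟨hne, -, -⟩
  obtain ⟨x, -⟩ := hne 0
  exact absurd x.2 (by omega)

section crec

variable (m k : ℕ)

-- the set of partitions of `Fin (m+1)` into `k+1` blocks
private def S2 (m k : ℕ) : Finset (Finset (Finset (Fin (m+1)))) :=
  Finset.univ.filter (fun π =>
    π.card = k + 1 ∧ (∀ B ∈ π, B.Nonempty) ∧
    (∀ B ∈ π, ∀ C ∈ π, B ≠ C → Disjoint B C) ∧
    π.biUnion id = Finset.univ)

private def phi (m : ℕ) (π : Finset (Finset (Fin (m+1)))) : Finset (Fin (m+1)) :=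
  (π.filter (fun B => Fin.last m ∉ B)).biUnion id

theorem stirling2_succ_succ :
    stirling2 (m+1) (k+1) =
      ∑ j ∈ range (m+1), Nat.choose m j * stirling2 j k := by
  have hS : stirling2 (m+1) (k+1) = (S2 m k).card := rfl
  rw [hS, Finset.card_eq_sum_card_fiberwise (f := phi m)
    (t := (Finset.univ.erase (Fin.last m)).powerset) ?_]
  swap
  · -- phi maps into powerset of erase (Fin.last m)
    intro π hπ
    simp only [S2, Finset.mem_coe, Finset.mem_filter, Finset.mem_univ, true_and] at hπ
    obtain ⟨-, -, -, -⟩ := hπ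
    rw [Finset.mem_coe, Finset.mem_powerset]
    intro x hx
    obtain ⟨B, hB, hxB⟩ := Finset.mem_biUnion.mp hx
    rw [Finset.mem_filter] at hB
    rw [Finset.mem_erase]
    refine ⟨fun h => hB.2 (h ▸ hxB), Finset.mem_univ x⟩
  -- each fiber has cardinality partCount A k
  have fiber : ∀ A ∈ (Finset.univ.erase (Fin.last m)).powerset,
      ((S2 m k).filter (fun π => phi m π = A)).card = partCount A k := by
    intro A hA
    rw [Finset.mem_powerset] at hA
    have htA : (Fin.last m) ∉ A := fun h => (Finset.mem_erase.mp (hA h)).1 rfl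
    unfold partCount
    refine Finset.card_nbij' (fun π => π.filter (fun B => (Fin.last m) ∉ B))
      (fun π' => insert (Finset.univ \ A) π') ?_ ?_ ?_ ?_
    · -- forward membership
      intro π hπ
      simp only [Finset.mem_coe, Finset.mem_filter, Finset.mem_univ, true_and, S2] at hπ
      obtain ⟨⟨hcard, hne, hdisj, hcover⟩, hphi⟩ := hπ
      have hsub : (π.filter (fun B => (Fin.last m) ∉ B)).biUnion id = A := hphi
      -- the filter with (Fin.last m) ∈ B has card 1
      have hex : ∃ B ∈ π, (Fin.last m) ∈ B := by
        have : (Fin.last m) ∈ π.biUnion id := hcover ▸ Finset.mem_univ (Fin.last m)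
        obtain ⟨B, hB, htB⟩ := Finset.mem_biUnion.mp this
        exact ⟨B, hB, htB⟩
      obtain ⟨Bt, hBt, htBt⟩ := hex
      have huniq : π.filter (fun B => (Fin.last m) ∈ B) = {Bt} := by
        ext C
        simp only [Finset.mem_filter, Finset.mem_singleton]
        constructor
        · rintro ⟨hC, htC⟩
          by_contra hne'
          exact Finset.disjoint_left.mp (hdisj C hC Bt hBt hne') htC htBt
        · rintro rfl; exact ⟨hBt, htBt⟩
      have hcardsplit := Finset.card_filter_add_card_filter_not
        (s := π) (p := fun B => (Fin.last m) ∈ B)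
      rw [huniq, Finset.card_singleton] at hcardsplit
      simp only [Finset.mem_coe, Finset.mem_filter, Finset.mem_powerset]
      refine ⟨?_, ?_, ?_, ?_, hsub⟩
      · intro B hB
        rw [Finset.mem_powerset]
        rw [Finset.mem_filter] at hB
        intro x hx
        rw [← hsub]
        exact Finset.mem_biUnion.mpr ⟨B, Finset.mem_filter.mpr hB, hx⟩
      · have : (π.filter (fun B => ¬ (Fin.last m) ∈ B)).card = k := by omega
        simpa using this
      · intro B hB
        exact hne B hB.1
      · intro B hB C hC hBC
        exact hdisj B hB.1 C hC.1 hBC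
    · -- backward membership
      intro π' hπ'
      simp only [Finset.mem_coe, Finset.mem_filter, Finset.mem_powerset] at hπ'
      obtain ⟨hsub, hcard, hne, hdisj, hcover⟩ := hπ'
      have hblocksub : ∀ B ∈ π', B ⊆ A := fun B hB => Finset.mem_powerset.mp (hsub hB)
      have hnotmem : Finset.univ \ A ∉ π' := by
        intro h
        have := hblocksub _ h
        have ht' : (Fin.last m) ∈ Finset.univ \ A := Finset.mem_sdiff.mpr ⟨Finset.mem_univ (Fin.last m), htA⟩
        exact htA (this ht')
      simp only [Finset.mem_coe, Finset.mem_filter, Finset.mem_univ, true_and, S2]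
      refine ⟨⟨?_, ?_, ?_, ?_⟩, ?_⟩
      · rw [Finset.card_insert_of_notMem hnotmem, hcard]
      · intro B hB
        rcases Finset.mem_insert.mp hB with rfl | hB'
        · exact ⟨(Fin.last m), Finset.mem_sdiff.mpr ⟨Finset.mem_univ (Fin.last m), htA⟩⟩
        · exact hne B hB'
      · intro B hB C hC hBC
        rcases Finset.mem_insert.mp hB with rfl | hB' <;>
          rcases Finset.mem_insert.mp hC with rfl | hC'
        · exact absurd rfl hBC
        · refine Finset.disjoint_left.mpr fun x hx hxC => ?_
          exact (Finset.mem_sdiff.mp hx).2 (hblocksub C hC' hxC)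
        · refine Finset.disjoint_left.mpr fun x hxB hx => ?_
          exact (Finset.mem_sdiff.mp hx).2 (hblocksub B hB' hxB)
        · exact hdisj B hB' C hC' hBC
      · ext x
        simp only [Finset.mem_biUnion, Finset.mem_insert, id_eq]
        constructor
        · intro _; exact Finset.mem_univ x
        · intro _
          by_cases hx : x ∈ A
          · rw [← hcover] at hx
            obtain ⟨B, hB, hxB⟩ := Finset.mem_biUnion.mp hx
            exact ⟨B, Or.inr hB, hxB⟩
          · exact ⟨Finset.univ \ A, Or.inl rfl, Finset.mem_sdiff.mpr ⟨Finset.mem_univ x, hx⟩⟩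
      · -- phi of the new partition is A
        unfold phi
        have : (insert (Finset.univ \ A) π').filter (fun B => (Fin.last m) ∉ B) = π' := by
          ext B
          simp only [Finset.mem_filter, Finset.mem_insert]
          constructor
          · rintro ⟨rfl | hB', htB⟩
            · exact absurd (Finset.mem_sdiff.mpr ⟨Finset.mem_univ (Fin.last m), htA⟩) htB
            · exact hB'
          · intro hB
            exact ⟨Or.inr hB, fun h => htA (hblocksub B hB h)⟩
        rw [this, hcover]
    · -- left inverse
      intro π hπ
      simp only [Finset.mem_coe, Finset.mem_filter, Finset.mem_univ, true_and, S2] at hπ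
      obtain ⟨⟨hcard, hne, hdisj, hcover⟩, hphi⟩ := hπ
      -- the (Fin.last m)-block equals univ \ A
      have key : ∀ B ∈ π, (Fin.last m) ∈ B → B = Finset.univ \ A := by
        intro B hB htB
        ext x
        simp only [Finset.mem_sdiff, Finset.mem_univ, true_and]
        constructor
        · intro hxB
          intro hxA
          rw [← hphi] at hxA
          obtain ⟨C, hC, hxC⟩ := Finset.mem_biUnion.mp hxA
          rw [Finset.mem_filter] at hC
          have hBC : B ≠ C := fun h => hC.2 (h ▸ htB)
          exact Finset.disjoint_left.mp (hdisj B hB C hC.1 hBC) hxB hxC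
        · intro hxA
          have : x ∈ π.biUnion id := hcover ▸ Finset.mem_univ x
          obtain ⟨C, hC, hxC⟩ := Finset.mem_biUnion.mp this
          by_cases htC : (Fin.last m) ∈ C
          · have hBCeq : B = C := by
              by_contra h
              exact Finset.disjoint_left.mp (hdisj B hB C hC h) htB htC
            rw [hBCeq]; exact hxC
          · exfalso
            apply hxA
            rw [← hphi]
            exact Finset.mem_biUnion.mpr ⟨C, Finset.mem_filter.mpr ⟨hC, htC⟩, hxC⟩
      have hex : ∃ B ∈ π, (Fin.last m) ∈ B := by
        have : (Fin.last m) ∈ π.biUnion id := hcover ▸ Finset.mem_univ (Fin.last m)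
        obtain ⟨B, hB, htB⟩ := Finset.mem_biUnion.mp this
        exact ⟨B, hB, htB⟩
      obtain ⟨Bt, hBt, htBt⟩ := hex
      dsimp only
      ext B
      simp only [Finset.mem_insert, Finset.mem_filter]
      constructor
      · rintro (rfl | ⟨hB, -⟩)
        · rwa [← key Bt hBt htBt]
        · exact hB
      · intro hB
        by_cases htB : (Fin.last m) ∈ B
        · exact Or.inl (key B hB htB)
        · exact Or.inr ⟨hB, htB⟩
    · -- right inverse
      intro π' hπ'
      simp only [Finset.mem_coe, Finset.mem_filter, Finset.mem_powerset] at hπ'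
      obtain ⟨hsub, -, -, -, -⟩ := hπ'
      have hblocksub : ∀ B ∈ π', B ⊆ A := fun B hB => Finset.mem_powerset.mp (hsub hB)
      dsimp only
      ext B
      simp only [Finset.mem_filter, Finset.mem_insert]
      constructor
      · rintro ⟨rfl | hB', htB⟩
        · exact absurd (Finset.mem_sdiff.mpr ⟨Finset.mem_univ _, htA⟩) htB
        · exact hB'
      · intro hB
        exact ⟨Or.inr hB, fun h => htA (hblocksub B hB h)⟩
  rw [Finset.sum_congr rfl fiber]
  have hcarderase : (Finset.univ.erase (Fin.last m)).card = m := by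
    rw [Finset.card_erase_of_mem (Finset.mem_univ _), Finset.card_univ, Fintype.card_fin]
    omega
  have step1 : ∀ A ∈ (Finset.univ.erase (Fin.last m)).powerset,
      partCount A k = stirling2 A.card k := fun A _ => partCount_eq_stirling2 A k
  rw [Finset.sum_congr rfl step1, Finset.sum_powerset, hcarderase]
  refine Finset.sum_congr rfl fun j hj => ?_
  have : ∀ A ∈ Finset.powersetCard j (Finset.univ.erase (Fin.last m)),
      stirling2 A.card k = stirling2 j k := by
    intro A hA
    rw [(Finset.mem_powersetCard.mp hA).2]
  rw [Finset.sum_congr rfl this, Finset.sum_const, Finset.card_powersetCard, hcarderase,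
    smul_eq_mul]

end crec

section grec

variable (m k : ℕ)

private def SG (m k : ℕ) : Finset (Fin (k+1) → Finset (Fin (m+1))) :=
  Finset.univ.filter (fun B =>
    (∀ i, (B i).Nonempty) ∧ Finset.univ.biUnion B = Finset.univ ∧
    ∀ i j : Fin (k+1), i < j → (B i).max < (B j).max)

private def phig (m k : ℕ) (B : Fin (k+1) → Finset (Fin (m+1))) : Finset (Fin (m+1)) :=
  Finset.univ.biUnion (fun i : Fin k => B i.castSucc)

theorem max_lt_of_last_mem {m : ℕ} (s u : Finset (Fin (m+1))) (hs : s.Nonempty)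
    (hssub : s ⊆ Finset.univ.erase (Fin.last m)) (hu : Fin.last m ∈ u) : s.max < u.max := by
  have hu' : u.Nonempty := ⟨_, hu⟩
  rw [← Finset.coe_max' hs, ← Finset.coe_max' hu', WithBot.coe_lt_coe]
  have h1 : s.max' hs ≠ Fin.last m :=
    fun h => (Finset.mem_erase.mp (hssub (Finset.max'_mem s hs))).1 h
  exact (lt_of_le_of_ne (Fin.le_last _) h1).trans_le (Finset.le_max' u _ hu)

theorem last_not_mem_early (B : Fin (k+1) → Finset (Fin (m+1))) (hB : B ∈ SG m k)
    (i : Fin k) : Fin.last m ∉ B i.castSucc := by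
  simp only [SG, Finset.mem_filter, Finset.mem_univ, true_and] at hB
  obtain ⟨hne, -, hmax⟩ := hB
  intro htB
  have h1 : (↑(Fin.last m) : WithBot (Fin (m+1))) ≤ (B i.castSucc).max := Finset.le_max htB
  have h2 := hmax i.castSucc (Fin.last k) (Fin.castSucc_lt_last i)
  have hne' := hne (Fin.last k)
  rw [← Finset.coe_max' hne'] at h2
  have h3 : (B (Fin.last k)).max' hne' ≤ Fin.last m := Fin.le_last _
  exact absurd (h1.trans_lt (h2.trans_le (WithBot.coe_le_coe.mpr h3))) (lt_irrefl _)

theorem early_subset (B : Fin (k+1) → Finset (Fin (m+1))) (hB : B ∈ SG m k)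
    (i : Fin k) : B i.castSucc ⊆ phig m k B :=
  fun x hx => Finset.mem_biUnion.mpr ⟨i, Finset.mem_univ i, hx⟩

theorem gstirling_succ_succ :
    gstirling (m+1) (k+1) =
      ∑ j ∈ range (m+1), Nat.choose m j * (2 ^ j * gstirling j k) := by
  have hS : gstirling (m+1) (k+1) = (SG m k).card := rfl
  rw [hS, Finset.card_eq_sum_card_fiberwise (f := phig m k)
    (t := (Finset.univ.erase (Fin.last m)).powerset) ?_]
  swap
  · intro B hB
    rw [Finset.mem_coe, Finset.mem_powerset]
    intro x hx
    obtain ⟨i, -, hxB⟩ := Finset.mem_biUnion.mp hx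
    rw [Finset.mem_erase]
    exact ⟨fun h => last_not_mem_early m k B hB i (h ▸ hxB), Finset.mem_univ x⟩
  have fiber : ∀ A ∈ (Finset.univ.erase (Fin.last m)).powerset,
      ((SG m k).filter (fun B => phig m k B = A)).card = gpartCount A k * 2 ^ A.card := by
    intro A hA
    rw [Finset.mem_powerset] at hA
    have htA : Fin.last m ∉ A := fun h => (Finset.mem_erase.mp (hA h)).1 rfl
    rw [show gpartCount A k * 2 ^ A.card =
      ((((Fintype.piFinset (fun _ : Fin k => A.powerset)).filter
        (fun C : Fin k → Finset (Fin (m+1)) =>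
          (∀ i, (C i).Nonempty) ∧ Finset.univ.biUnion C = A ∧
          ∀ i j : Fin k, i < j → (C i).max < (C j).max))) ×ˢ A.powerset).card from by
        rw [Finset.card_product, Finset.card_powerset]; rfl]
    refine Finset.card_nbij' (fun B => (fun i => B i.castSucc, B (Fin.last k) ∩ A))
      (fun CD => fun i : Fin (k+1) =>
        if h : (i : ℕ) < k then CD.1 ⟨i, h⟩ else (Finset.univ \ A) ∪ CD.2) ?_ ?_ ?_ ?_
    · -- forward membership
      intro B hB
      rw [Finset.mem_coe, Finset.mem_filter] at hB
      obtain ⟨hBS, hphi⟩ := hB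
      have hBS' := hBS
      simp only [SG, Finset.mem_filter, Finset.mem_univ, true_and] at hBS'
      obtain ⟨hne, hcover, hmax⟩ := hBS'
      simp only [Finset.mem_coe, Finset.mem_product, Finset.mem_filter, Fintype.mem_piFinset,
        Finset.mem_powerset]
      refine ⟨⟨fun i => ?_, fun i => hne _, ?_, fun i j hij => ?_⟩, Finset.inter_subset_right⟩
      · rw [← hphi]; exact early_subset m k B hBS i
      · exact hphi
      · exact hmax i.castSucc j.castSucc (Fin.castSucc_lt_castSucc_iff.mpr hij)
    · -- backward membership
      rintro ⟨C, D⟩ hCD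
      simp only [Finset.mem_coe, Finset.mem_product, Finset.mem_filter, Fintype.mem_piFinset,
        Finset.mem_powerset] at hCD
      obtain ⟨⟨hsub, hne, hcover, hmax⟩, hD⟩ := hCD
      have hlastmem : Fin.last m ∈ (Finset.univ \ A) ∪ D :=
        Finset.mem_union_left _ (Finset.mem_sdiff.mpr ⟨Finset.mem_univ _, htA⟩)
      have hBdef : ∀ (i : Fin k),
          (if h : ((i.castSucc : Fin (k+1)) : ℕ) < k then C ⟨((i.castSucc : Fin (k+1)) : ℕ), h⟩
            else (Finset.univ \ A) ∪ D) = C i := by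
        intro i
        rw [dif_pos (by simpa using i.isLt)]
        congr 1
      rw [Finset.mem_coe, Finset.mem_filter]
      constructor
      · simp only [SG, Finset.mem_filter, Finset.mem_univ, true_and]
        refine ⟨fun i => ?_, ?_, fun i j hij => ?_⟩
        · by_cases h : (i : ℕ) < k
          · rw [dif_pos h]; exact hne _
          · rw [dif_neg h]; exact ⟨_, hlastmem⟩
        · ext x
          simp only [Finset.mem_biUnion, Finset.mem_univ, true_and, iff_true]
          by_cases hx : x ∈ A
          · rw [← hcover] at hx
            obtain ⟨i, -, hxC⟩ := Finset.mem_biUnion.mp hx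
            exact ⟨i.castSucc, by rw [hBdef]; exact hxC⟩
          · refine ⟨Fin.last k, ?_⟩
            rw [dif_neg (by simp)]
            exact Finset.mem_union_left _ (Finset.mem_sdiff.mpr ⟨Finset.mem_univ x, hx⟩)
        · by_cases hj : (j : ℕ) < k
          · have hij' : (i : ℕ) < (j : ℕ) := hij
            have hi : (i : ℕ) < k := lt_trans hij' hj
            rw [dif_pos hi, dif_pos hj]
            exact hmax ⟨i, hi⟩ ⟨j, hj⟩ (Fin.mk_lt_mk.mpr hij')
          · have hij' : (i : ℕ) < (j : ℕ) := hij
            have hi : (i : ℕ) < k := by omega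
            rw [dif_pos hi, dif_neg hj]
            refine max_lt_of_last_mem _ _ (hne _) ?_ hlastmem
            intro x hx
            rw [Finset.mem_erase]
            refine ⟨fun hxeq => htA ?_, Finset.mem_univ x⟩
            rw [← hxeq]
            exact hsub ⟨i, hi⟩ hx
      · -- phig = A
        unfold phig
        ext x
        simp only [Finset.mem_biUnion, Finset.mem_univ, true_and]
        constructor
        · rintro ⟨i, hx⟩
          rw [hBdef] at hx
          rw [← hcover]
          exact Finset.mem_biUnion.mpr ⟨i, Finset.mem_univ _, hx⟩
        · intro hx
          rw [← hcover] at hx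
          obtain ⟨i, -, hxC⟩ := Finset.mem_biUnion.mp hx
          exact ⟨i, by rw [hBdef]; exact hxC⟩
    · -- left inverse
      intro B hB
      rw [Finset.mem_coe, Finset.mem_filter] at hB
      obtain ⟨hBS, hphi⟩ := hB
      have hBS' := hBS
      simp only [SG, Finset.mem_filter, Finset.mem_univ, true_and] at hBS'
      obtain ⟨hne, hcover, hmax⟩ := hBS'
      have hearly : ∀ (i : Fin (k+1)), i ≠ Fin.last k → B i ⊆ A := by
        intro i hi x hx
        have hival : (i : ℕ) < k := by
          rcases Fin.lt_or_eq_of_le (Fin.le_last i) with h | h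
          · exact h
          · exact absurd h hi
        have : i = (⟨(i : ℕ), hival⟩ : Fin k).castSucc := Fin.ext rfl
        rw [← hphi]
        exact early_subset m k B hBS ⟨(i : ℕ), hival⟩ (by rw [← this]; exact hx)
      have hlastsub : Finset.univ \ A ⊆ B (Fin.last k) := by
        intro x hx
        obtain ⟨-, hxA⟩ := Finset.mem_sdiff.mp hx
        have : x ∈ Finset.univ.biUnion B := hcover ▸ Finset.mem_univ x
        obtain ⟨i, -, hxB⟩ := Finset.mem_biUnion.mp this
        by_cases hi : i = Fin.last k
        · rwa [← hi]
        · exact absurd (hearly i hi hxB) hxA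
      funext i
      dsimp only
      by_cases h : (i : ℕ) < k
      · rw [dif_pos h]
        congr 1
      · rw [dif_neg h]
        have hi : i = Fin.last k := Fin.ext (by have := i.isLt; simp [Fin.last]; omega)
        subst hi
        ext x
        simp only [Finset.mem_union, Finset.mem_sdiff, Finset.mem_inter, Finset.mem_univ,
          true_and]
        constructor
        · rintro (hx | ⟨hx, -⟩)
          · exact hlastsub (Finset.mem_sdiff.mpr ⟨Finset.mem_univ x, hx⟩)
          · exact hx
        · intro hx
          by_cases hxA : x ∈ A
          · exact Or.inr ⟨hx, hxA⟩
          · exact Or.inl hxA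
    · -- right inverse
      rintro ⟨C, D⟩ hCD
      simp only [Finset.mem_coe, Finset.mem_product, Finset.mem_filter, Fintype.mem_piFinset,
        Finset.mem_powerset] at hCD
      obtain ⟨⟨hsub, hne, hcover, hmax⟩, hD⟩ := hCD
      have hBdef : ∀ (i : Fin k),
          (if h : ((i.castSucc : Fin (k+1)) : ℕ) < k then C ⟨((i.castSucc : Fin (k+1)) : ℕ), h⟩
            else (Finset.univ \ A) ∪ D) = C i := by
        intro i
        rw [dif_pos (by simpa using i.isLt)]
        congr 1
      dsimp only
      refine Prod.ext ?_ ?_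
      · funext i
        exact hBdef i
      · show (if h : ((Fin.last k : Fin (k+1)) : ℕ) < k then _ else (Finset.univ \ A) ∪ D) ∩ A = D
        rw [dif_neg (by simp)]
        ext x
        simp only [Finset.mem_inter, Finset.mem_union, Finset.mem_sdiff, Finset.mem_univ,
          true_and]
        constructor
        · rintro ⟨hx | hx, hxA⟩
          · exact absurd hxA hx
          · exact hx
        · intro hx
          exact ⟨Or.inr hx, hD hx⟩
  rw [Finset.sum_congr rfl fiber]
  have hcarderase : (Finset.univ.erase (Fin.last m)).card = m := by
    rw [Finset.card_erase_of_mem (Finset.mem_univ _), Finset.card_univ, Fintype.card_fin]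
    omega
  have step1 : ∀ A ∈ (Finset.univ.erase (Fin.last m)).powerset,
      gpartCount A k * 2 ^ A.card = gstirling A.card k * 2 ^ A.card := fun A _ => by
    rw [gpartCount_eq_gstirling]
  rw [Finset.sum_congr rfl step1, Finset.sum_powerset, hcarderase]
  refine Finset.sum_congr rfl fun j hj => ?_
  have : ∀ A ∈ Finset.powersetCard j (Finset.univ.erase (Fin.last m)),
      gstirling A.card k * 2 ^ A.card = gstirling j k * 2 ^ j := by
    intro A hA
    rw [(Finset.mem_powersetCard.mp hA).2]
  rw [Finset.sum_congr rfl this, Finset.sum_const, Finset.card_powersetCard, hcarderase,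
    smul_eq_mul]
  ring

end grec


theorem divPow_succ_zero (lam : ℝ) (f : ℕ → ℝ) (k : ℕ) : divPow lam f (k+1) 0 = 0 := rfl

theorem divPow_succ_succ (lam : ℝ) (f : ℕ → ℝ) (k m : ℕ) :
    divPow lam f (k+1) (m+1) = starMul lam (divPow lam f k) (dOp f) m := rfl

theorem main_zero (f : ℕ → ℝ) (hf : ∀ m : ℕ, 1 ≤ m → f m = 1) :
    ∀ k n : ℕ, divPow 0 f k n = (stirling2 n k : ℝ) := by
  intro k
  induction k with
  | zero =>
    intro n
    show delta 0 n = _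
    rw [stirling2_zero_right]
    unfold delta
    split_ifs <;> simp
  | succ k ih =>
    intro n
    rcases n with _ | m
    · rw [divPow_succ_zero, stirling2_zero_left]
      simp
    · rw [divPow_succ_succ, starMul_zero f _ hf m, stirling2_succ_succ]
      push_cast
      exact Finset.sum_congr rfl fun j _ => by rw [ih j]

theorem main_one (f : ℕ → ℝ) (hf : ∀ m : ℕ, 1 ≤ m → f m = 1) :
    ∀ k n : ℕ, divPow 1 f k n = (gstirling n k : ℝ) := by
  intro k
  induction k with
  | zero =>
    intro n
    show delta 0 n = _
    rw [gstirling_zero_right]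
    unfold delta
    split_ifs <;> simp
  | succ k ih =>
    intro n
    rcases n with _ | m
    · rw [divPow_succ_zero, gstirling_zero_left]
      simp
    · rw [divPow_succ_succ, starMul_one f _ hf m, gstirling_succ_succ]
      push_cast
      refine Finset.sum_congr rfl fun j _ => by rw [ih j]; ring

/-- If `f(m) = 1` for all `m ≥ 1`, then for `k, n ≥ 1`: for weight `lam = 0` the `k`-th
divided power satisfies `f^{[k]}(n) = S(n,k)`, and for `lam = 1` it satisfies
`f^{[k]}(n) = \overline{S}(n,k)`. -/
theorem stmt16 (lam : ℝ) (f : ℕ → ℝ) (hf : ∀ m : ℕ, 1 ≤ m → f m = 1)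
    (k n : ℕ) (hk : 1 ≤ k) (hn : 1 ≤ n) :
    (lam = 0 → divPow lam f k n = (stirling2 n k : ℝ)) ∧
    (lam = 1 → divPow lam f k n = (gstirling n k : ℝ)) := by
  constructor
  · rintro rfl
    exact main_zero f hf k n
  · rintro rfl
    exact main_one f hf k n
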